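/- For L > m ≥ 0, Q_m^L(q) = q^{m+1}(Q_{−2−m}^{L−1−m}(q) + 1). -/

import Mathlib

namespace Dyson

/-- The rank of a partition: largest part minus number of parts. -/
def rank {n : ℕ} (π : n.Partition) : ℤ :=
  (π.parts.sup : ℤ) - π.parts.card

/-- The Euler product `(q;q)_∞`. -/
noncomputable def euler (q : ℝ) : ℝ := ∏' j : ℕ, (1 - q ^ (j + 1))

/-- `Q_m(q)`: generating function for nonempty partitions of rank ≥ m. -/
noncomputable def Q (q : ℝ) (m : ℤ) : ℝ :=
  ∑' n : ℕ, (Nat.card {π : (n + 1).Partition // m ≤ rank π} : ℝ) * q ^ (n + 1)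

noncomputable def qPoch (q : ℝ) (n : ℕ) : ℝ := ∏ j ∈ Finset.range n, (1 - q ^ (j + 1))

noncomputable def qbinom (q : ℝ) (a b : ℤ) : ℝ :=
  if 0 ≤ b ∧ b ≤ a then qPoch q a.toNat / (qPoch q b.toNat * qPoch q (a - b).toNat) else 0

noncomputable def QL (q : ℝ) (m L : ℤ) : ℝ :=
  ∑' n : ℕ,
    (Nat.card {π : (n + 1).Partition // m ≤ rank π ∧ (π.parts.sup : ℤ) ≤ L} : ℝ) * q ^ (n + 1)

def partAt {n : ℕ} (π : n.Partition) (j : ℕ) : ℕ :=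
  ((π.parts.sort (· ≤ ·)).reverse.getD j 0)

def inRankSet {n : ℕ} (π : n.Partition) (k : ℤ) : Prop :=
  ∃ j : ℕ, (j : ℤ) - partAt π (j + 1) = k

noncomputable def G (q : ℝ) (k : ℤ) : ℝ :=
  ∑' n : ℕ, (Nat.card {π : n.Partition // inRankSet π k} : ℝ) * q ^ n

def crank {n : ℕ} (π : n.Partition) : ℤ :=
  if π.parts.count 1 = 0 then (π.parts.sup : ℤ)
  else ((π.parts.filter (fun p => π.parts.count 1 < p)).card : ℤ) - π.parts.count 1


open Multiset

/-- number of parts of `s` exceeding `i` -/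
def gc (s : Multiset ℕ) (i : ℕ) : ℕ := s.countP (fun p => i < p)

lemma gc_anti (s : Multiset ℕ) {i j : ℕ} (h : i ≤ j) : gc s j ≤ gc s i := by
  unfold gc
  rw [countP_eq_card_filter, countP_eq_card_filter]
  exact card_le_card (monotone_filter_right s (fun p hp => lt_of_le_of_lt h hp))

lemma gc_eq_zero (s : Multiset ℕ) {i : ℕ} (h : s.sup ≤ i) : gc s i = 0 := by
  unfold gc
  rw [countP_eq_zero]
  exact fun p hp hlt => absurd (le_trans (le_sup hp) h) (not_le.mpr hlt)

lemma gc_le_card (s : Multiset ℕ) (i : ℕ) : gc s i ≤ s.card := countP_le_card _ _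

lemma gc_zero (s : Multiset ℕ) (hpos : ∀ a ∈ s, 0 < a) : gc s 0 = s.card :=
  countP_eq_card.mpr hpos

lemma gc_split (s : Multiset ℕ) (b : ℕ) : gc s b = gc s (b + 1) + s.count (b + 1) := by
  induction s using Multiset.induction with
  | empty => simp [gc]
  | cons a s ih =>
    unfold gc at *
    rw [countP_cons, countP_cons, count_cons, ih]
    split_ifs <;> omega

lemma eq_of_gc_eq {s t : Multiset ℕ} (hs : ∀ a ∈ s, 0 < a) (ht : ∀ a ∈ t, 0 < a)
    (hg : ∀ i, gc s i = gc t i) : s = t := by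
  ext a
  match a with
  | 0 =>
    rw [count_eq_zero.2 (fun h => lt_irrefl 0 (hs 0 h)),
      count_eq_zero.2 (fun h => lt_irrefl 0 (ht 0 h))]
  | b + 1 =>
    have h1 := gc_split s b
    have h2 := gc_split t b
    have h3 := hg b
    have h4 := hg (b + 1)
    omega

/-- multiset of naturals has its sup as a member when nonempty -/
lemma sup_mem (s : Multiset ℕ) (h : s ≠ 0) : s.sup ∈ s := by
  induction s using Multiset.induction with
  | empty => exact absurd rfl h
  | cons a s ih =>
    rw [sup_cons]
    rcases eq_or_ne s 0 with rfl | hs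
    · simp
    · rcases le_total a s.sup with hle | hle
      · rw [sup_eq_right.mpr hle]; exact mem_cons_of_mem (ih hs)
      · rw [sup_eq_left.mpr hle]; exact mem_cons_self a s

/-- conjugate multiset -/
def conj (s : Multiset ℕ) : Multiset ℕ := (Multiset.range s.sup).map (gc s)

lemma card_conj (s : Multiset ℕ) : (conj s).card = s.sup := by simp [conj]

lemma conj_pos (s : Multiset ℕ) (h : s ≠ 0) : ∀ a ∈ conj s, 0 < a := by
  intro a ha
  rw [conj, mem_map] at ha
  obtain ⟨i, hi, rfl⟩ := ha
  rw [Multiset.mem_range] at hi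
  exact countP_pos.2 ⟨s.sup, sup_mem s h, hi⟩

lemma sup_conj (s : Multiset ℕ) (hpos : ∀ a ∈ s, 0 < a) : (conj s).sup = s.card := by
  rcases eq_or_ne s 0 with rfl | h
  · simp [conj]
  · apply le_antisymm
    · rw [Multiset.sup_le]
      intro b hb
      rw [conj, mem_map] at hb
      obtain ⟨i, _, rfl⟩ := hb
      exact gc_le_card s i
    · have h0 : (0 : ℕ) ∈ Multiset.range s.sup := by
        rw [Multiset.mem_range]
        have h1 := sup_mem s h
        have := hpos _ h1
        exact lt_of_lt_of_le this (le_sup h1)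
      have : gc s 0 ∈ conj s := mem_map_of_mem _ h0
      rw [gc_zero s hpos] at this
      exact le_sup this

lemma sum_conj (s : Multiset ℕ) : (conj s).sum = s.sum := by
  have key : ∀ (t : Multiset ℕ) (M : ℕ), (∀ a ∈ t, a ≤ M) →
      ∑ i ∈ Finset.range M, gc t i = t.sum := by
    intro t M
    induction t using Multiset.induction with
    | empty => intro _; simp [gc]
    | cons a t ih =>
      intro hle
      have ha : a ≤ M := hle a (mem_cons_self a t)
      have hstep : ∀ i, gc (a ::ₘ t) i = gc t i + if i < a then 1 else 0 := by
        intro i; unfold gc; rw [countP_cons]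
      simp only [hstep, Finset.sum_add_distrib]
      rw [ih (fun b hb => hle b (mem_cons_of_mem hb)), sum_cons]
      have : ∑ i ∈ Finset.range M, (if i < a then 1 else 0) = a := by
        rw [← Finset.card_filter]
        have : (Finset.range M).filter (fun i => i < a) = Finset.range a := by
          ext i; simp; omega
        simp [this]
      omega
  have hrw : (conj s).sum = ∑ i ∈ Finset.range s.sup, gc s i := rfl
  rw [hrw]
  exact key s s.sup (fun a ha => le_sup ha)

lemma gc_conj (s : Multiset ℕ) (j : ℕ) :
    gc (conj s) j = ((Finset.range s.sup).filter (fun i => j < gc s i)).card := by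
  rw [conj, gc, countP_map, Finset.card_def, Finset.filter_val, Finset.range_val,
    ← countP_eq_card_filter]

/-- key down-set lemma -/
lemma key_iff (s : Multiset ℕ) (N i j : ℕ) (hN : s.sup ≤ N) :
    i < ((Finset.range N).filter (fun i' => j < gc s i')).card ↔ j < gc s i := by
  constructor
  · intro hcard
    by_contra hn
    push_neg at hn
    have hsub : (Finset.range N).filter (fun i' => j < gc s i') ⊆ Finset.range i := by
      intro a ha
      simp only [Finset.mem_filter, Finset.mem_range] at ha ⊢
      by_contra hai
      push_neg at hai
      have : gc s a ≤ gc s i := gc_anti s hai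
      omega
    have := Finset.card_le_card hsub
    simp only [Finset.card_range] at this
    omega
  · intro hj
    have hiN : i < N := by
      by_contra hiN
      have : gc s i = 0 := gc_eq_zero s (by omega)
      omega
    have hsub : Finset.range (i + 1) ⊆ (Finset.range N).filter (fun i' => j < gc s i') := by
      intro a ha
      simp only [Finset.mem_range] at ha
      simp only [Finset.mem_filter, Finset.mem_range]
      exact ⟨by omega, lt_of_lt_of_le hj (gc_anti s (by omega))⟩
    have := Finset.card_le_card hsub
    simp only [Finset.card_range] at this
    omega

lemma gc_conj_conj (s : Multiset ℕ) (hpos : ∀ a ∈ s, 0 < a) (h : s ≠ 0) (i : ℕ) :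
    gc (conj (conj s)) i = gc s i := by
  rw [gc_conj]
  have heq : (Finset.range (conj s).sup).filter (fun j => i < gc (conj s) j)
      = (Finset.range (conj s).sup).filter (fun j => j < gc s i) := by
    apply Finset.filter_congr
    intro j _
    simp only [gc_conj s j, eq_iff_iff]
    exact key_iff s s.sup i j le_rfl
  rw [heq, sup_conj s hpos]
  have : (Finset.range s.card).filter (fun j => j < gc s i) = Finset.range (gc s i) := by
    ext j
    simp only [Finset.mem_filter, Finset.mem_range]
    have := gc_le_card s i
    omega
  rw [this, Finset.card_range]

lemma conj_conj (s : Multiset ℕ) (hpos : ∀ a ∈ s, 0 < a) : conj (conj s) = s := by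
  rcases eq_or_ne s 0 with rfl | h
  · simp [conj]
  · refine eq_of_gc_eq (conj_pos (conj s) ?_) hpos (gc_conj_conj s hpos h)
    intro hc
    rw [conj, Multiset.map_eq_zero] at hc
    have hsup : s.sup = 0 := by
      by_contra hsup
      have : (0 : ℕ) ∈ Multiset.range s.sup := Multiset.mem_range.mpr (Nat.pos_of_ne_zero hsup)
      rw [hc] at this
      exact notMem_zero 0 this
    have h1 := sup_mem s h
    have := hpos _ h1
    have := le_sup h1
    omega



/- ### helper facts about multisets of positive naturals -/

lemma mem_le_sum {s : Multiset ℕ} {a : ℕ} (h : a ∈ s) : a ≤ s.sum := by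
  have := Multiset.cons_erase h
  calc a ≤ a + (s.erase a).sum := Nat.le_add_right _ _
  _ = s.sum := by rw [← Multiset.sum_cons, this]

lemma card_le_sum {s : Multiset ℕ} (h : ∀ a ∈ s, 0 < a) : s.card ≤ s.sum := by
  induction s using Multiset.induction with
  | empty => simp
  | cons a s ih =>
    rw [card_cons, sum_cons]
    have := h a (mem_cons_self a s)
    have := ih (fun b hb => h b (mem_cons_of_mem hb))
    omega

lemma sum_erase_sup {s : Multiset ℕ} (h : s ≠ 0) :
    (s.erase s.sup).sum = s.sum - s.sup := by
  have hmem := sup_mem s h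
  have := Multiset.cons_erase hmem
  have h2 : s.sum = s.sup + (s.erase s.sup).sum := by rw [← Multiset.sum_cons, this]
  omega

lemma sup_erase_le {s : Multiset ℕ} : (s.erase s.sup).sup ≤ s.sup := by
  rw [Multiset.sup_le]
  exact fun b hb => le_sup (mem_of_mem_erase hb)

/- ### Dyson's bounded map, at the multiset level -/

/-- forward map: remove largest part λ, conjugate rest, add part λ-(m+1) -/
def dmap (m : ℕ) (s : Multiset ℕ) : Multiset ℕ :=
  (s.sup - (m + 1)) ::ₘ conj (s.erase s.sup)

/-- backward map: remove largest part a, conjugate rest, add part a+(m+1) -/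
def emap (m : ℕ) (s : Multiset ℕ) : Multiset ℕ :=
  (s.sup + (m + 1)) ::ₘ conj (s.erase s.sup)

lemma conj_pos' {s : Multiset ℕ} : ∀ a ∈ conj s, 0 < a := by
  rcases eq_or_ne s 0 with rfl | h
  · simp [conj]
  · exact conj_pos s h

lemma erase_pos {s : Multiset ℕ} (h : ∀ a ∈ s, 0 < a) : ∀ a ∈ s.erase s.sup, 0 < a :=
  fun a ha => h a (mem_of_mem_erase ha)

section dprops
variable {m : ℕ} {s : Multiset ℕ} (hne : s ≠ 0) (hpos : ∀ a ∈ s, 0 < a)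

include hne in
lemma dmap_sum (hm : m + 1 ≤ s.sup) : (dmap m s).sum = s.sum - (m + 1) := by
  have h1 : s.sup ≤ s.sum := mem_le_sum (sup_mem s hne)
  rw [dmap, sum_cons, sum_conj, sum_erase_sup hne]
  omega

lemma dmap_pos (hm : m + 2 ≤ s.sup) : ∀ a ∈ dmap m s, 0 < a := by
  intro a ha
  rw [dmap, mem_cons] at ha
  rcases ha with rfl | ha
  · omega
  · exact conj_pos' a ha

include hne hpos in
lemma dmap_sup (hrank : s.card + m ≤ s.sup) : (dmap m s).sup = s.sup - (m + 1) := by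
  rw [dmap, sup_cons, sup_conj _ (erase_pos hpos)]
  have : (s.erase s.sup).card = s.card - 1 := card_erase_of_mem (sup_mem s hne)
  have hc : 1 ≤ s.card := by
    rw [Nat.one_le_iff_ne_zero, Ne, Multiset.card_eq_zero]; exact hne
  rw [this]
  omega

include hne in
lemma dmap_card : (dmap m s).card = (s.erase s.sup).sup + 1 := by
  rw [dmap, card_cons, card_conj]

include hne hpos in
lemma emap_dmap (hm : m + 2 ≤ s.sup) (hrank : s.card + m ≤ s.sup) :
    emap m (dmap m s) = s := by
  have hsup : (dmap m s).sup = s.sup - (m + 1) := dmap_sup hne hpos hrank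
  rw [emap, hsup, dmap, Multiset.erase_cons_head, conj_conj _ (erase_pos hpos)]
  have : s.sup - (m + 1) + (m + 1) = s.sup := by omega
  rw [this, Multiset.cons_erase (sup_mem s hne)]

include hne hpos in
lemma emap_sum : (emap m s).sum = s.sum + (m + 1) := by
  have h1 : s.sup ≤ s.sum := mem_le_sum (sup_mem s hne)
  rw [emap, sum_cons, sum_conj, sum_erase_sup hne]
  omega

lemma emap_pos : ∀ a ∈ emap m s, 0 < a := by
  intro a ha
  rw [emap, mem_cons] at ha
  rcases ha with rfl | ha
  · omega
  · exact conj_pos' a ha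

include hne hpos in
lemma emap_sup (hrank : s.card ≤ s.sup + m + 2) : (emap m s).sup = s.sup + (m + 1) := by
  rw [emap, sup_cons, sup_conj _ (erase_pos hpos)]
  have : (s.erase s.sup).card = s.card - 1 := card_erase_of_mem (sup_mem s hne)
  rw [this]
  omega

include hne in
lemma emap_card : (emap m s).card = (s.erase s.sup).sup + 1 := by
  rw [emap, card_cons, card_conj]

include hne hpos in
lemma dmap_emap (hrank : s.card ≤ s.sup + m + 2) :
    dmap m (emap m s) = s := by
  have hsup : (emap m s).sup = s.sup + (m + 1) := emap_sup hne hpos hrank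
  rw [dmap, hsup, emap, Multiset.erase_cons_head, conj_conj _ (erase_pos hpos)]
  have : s.sup + (m + 1) - (m + 1) = s.sup := by omega
  rw [this, Multiset.cons_erase (sup_mem s hne)]

end dprops



/- ### cardinality lemmas -/

lemma parts_ne_zero {N : ℕ} (π : N.Partition) (hN : 0 < N) : π.parts ≠ 0 := by
  intro h
  have := π.parts_sum
  rw [h] at this
  simp at this
  omega

lemma rank_nat {N : ℕ} (π : N.Partition) {m : ℕ} (hr : (m : ℤ) ≤ rank π) :
    π.parts.card + m ≤ π.parts.sup := by
  unfold rank at hr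
  omega

lemma sup_big {m j : ℕ} (π : (m + j + 2).Partition) (hr : (m : ℤ) ≤ rank π) :
    m + 2 ≤ π.parts.sup := by
  have hne : π.parts ≠ 0 := parts_ne_zero π (by omega)
  have hrank := rank_nat π hr
  have hc : 1 ≤ π.parts.card := by
    rw [Nat.one_le_iff_ne_zero, Ne, Multiset.card_eq_zero]; exact hne
  by_cases h1 : π.parts.card = 1
  · obtain ⟨a, ha⟩ := Multiset.card_eq_one.mp h1
    have hsum := π.parts_sum
    rw [ha] at hsum ⊢
    simp only [Multiset.sum_singleton] at hsum
    rw [Multiset.sup_singleton]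
    omega
  · omega

lemma card_bij (m L j : ℕ) :
    Nat.card {π : (m + j + 2).Partition // (m : ℤ) ≤ rank π ∧ (π.parts.sup : ℤ) ≤ (L : ℤ)}
      = Nat.card {π : (j + 1).Partition //
          (-2 - (m : ℤ)) ≤ rank π ∧ (π.parts.sup : ℤ) ≤ (L : ℤ) - 1 - (m : ℤ)} := by
  apply Nat.card_congr
  refine ⟨?_, ?_, ?_, ?_⟩
  · rintro ⟨π, hr, hs⟩
    have hne : π.parts ≠ 0 := parts_ne_zero π (by omega)
    have hpos : ∀ a ∈ π.parts, 0 < a := fun a ha => π.parts_pos ha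
    have hrank := rank_nat π hr
    have hm2 := sup_big π hr
    refine ⟨⟨dmap m π.parts, fun {a} ha => dmap_pos (by omega) a ha, ?_⟩, ?_, ?_⟩
    · rw [dmap_sum hne (by omega), π.parts_sum]; omega
    · show (-2 - (m:ℤ)) ≤ (((dmap m π.parts).sup : ℤ) - (dmap m π.parts).card)
      rw [dmap_sup hne hpos hrank, dmap_card hne]
      have h1 : (π.parts.erase π.parts.sup).sup ≤ π.parts.sup := sup_erase_le
      have h2 : m + 1 ≤ π.parts.sup := by omega
      push_cast
      omega
    · show ((dmap m π.parts).sup : ℤ) ≤ (L : ℤ) - 1 - m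
      rw [dmap_sup hne hpos hrank]
      have h2 : m + 1 ≤ π.parts.sup := by omega
      push_cast
      omega
  · rintro ⟨σ, hr, hs⟩
    have hne : σ.parts ≠ 0 := parts_ne_zero σ (by omega)
    have hpos : ∀ a ∈ σ.parts, 0 < a := fun a ha => σ.parts_pos ha
    have hrank : σ.parts.card ≤ σ.parts.sup + m + 2 := by
      unfold rank at hr; omega
    refine ⟨⟨emap m σ.parts, fun {a} ha => emap_pos a ha, ?_⟩, ?_, ?_⟩
    · rw [emap_sum hne hpos, σ.parts_sum]; omega
    · show (m : ℤ) ≤ (((emap m σ.parts).sup : ℤ) - (emap m σ.parts).card)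
      rw [emap_sup hne hpos hrank, emap_card hne]
      have h1 : (σ.parts.erase σ.parts.sup).sup ≤ σ.parts.sup := sup_erase_le
      push_cast
      omega
    · show ((emap m σ.parts).sup : ℤ) ≤ (L : ℤ)
      rw [emap_sup hne hpos hrank]
      push_cast
      omega
  · rintro ⟨π, hr, hs⟩
    have hne : π.parts ≠ 0 := parts_ne_zero π (by omega)
    have hpos : ∀ a ∈ π.parts, 0 < a := fun a ha => π.parts_pos ha
    have hrank := rank_nat π hr
    have hm2 := sup_big π hr
    apply Subtype.ext
    apply Nat.Partition.ext
    exact emap_dmap hne hpos hm2 hrank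
  · rintro ⟨σ, hr, hs⟩
    have hne : σ.parts ≠ 0 := parts_ne_zero σ (by omega)
    have hpos : ∀ a ∈ σ.parts, 0 < a := fun a ha => σ.parts_pos ha
    have hrank : σ.parts.card ≤ σ.parts.sup + m + 2 := by
      unfold rank at hr; omega
    apply Subtype.ext
    apply Nat.Partition.ext
    exact dmap_emap hne hpos hrank

lemma card_base (m L : ℕ) (h : m < L) :
    Nat.card {π : (m + 1).Partition // (m : ℤ) ≤ rank π ∧ (π.parts.sup : ℤ) ≤ (L : ℤ)} = 1 := by
  have key : ∀ π : (m + 1).Partition, (m : ℤ) ≤ rank π → π.parts = {m + 1} := by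
    intro π hr
    have hne : π.parts ≠ 0 := parts_ne_zero π (by omega)
    have hrank := rank_nat π hr
    have hc : 1 ≤ π.parts.card := by
      rw [Nat.one_le_iff_ne_zero, Ne, Multiset.card_eq_zero]; exact hne
    have hsup : π.parts.sup ≤ m + 1 := by
      have := mem_le_sum (sup_mem _ hne)
      rw [π.parts_sum] at this
      exact this
    have hcard : π.parts.card = 1 := by omega
    obtain ⟨a, ha⟩ := Multiset.card_eq_one.mp hcard
    have hsum := π.parts_sum
    rw [ha] at hsum ⊢
    simp only [Multiset.sum_singleton] at hsum
    rw [hsum]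
  rw [Nat.card_eq_one_iff_unique]
  constructor
  · constructor
    rintro ⟨π₁, hr₁, _⟩ ⟨π₂, hr₂, _⟩
    apply Subtype.ext
    apply Nat.Partition.ext
    rw [key π₁ hr₁, key π₂ hr₂]
  · refine ⟨⟨⟨{m + 1}, by simp, by simp⟩, ?_, ?_⟩⟩
    · unfold rank
      simp only [Multiset.sup_singleton, Multiset.card_singleton]
      push_cast; omega
    · simp only [Multiset.sup_singleton]
      push_cast; omega

lemma card_small (m L n : ℕ) (hn : n < m) :
    Nat.card {π : (n + 1).Partition // (m : ℤ) ≤ rank π ∧ (π.parts.sup : ℤ) ≤ (L : ℤ)} = 0 := by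
  rw [Nat.card_eq_zero]
  left
  constructor
  rintro ⟨π, hr, _⟩
  have hne : π.parts ≠ 0 := parts_ne_zero π (by omega)
  have hrank := rank_nat π hr
  have hc : 1 ≤ π.parts.card := by
    rw [Nat.one_le_iff_ne_zero, Ne, Multiset.card_eq_zero]; exact hne
  have hsup : π.parts.sup ≤ n + 1 := by
    have := mem_le_sum (sup_mem _ hne)
    rw [π.parts_sum] at this
    exact this
  omega

lemma card_le_bound (N L : ℕ) (mz B : ℤ) (hB : B ≤ (L : ℤ)) :
    Nat.card {π : N.Partition // mz ≤ rank π ∧ (π.parts.sup : ℤ) ≤ B} ≤ (N + 1) ^ L := by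
  have key : Nat.card {π : N.Partition // mz ≤ rank π ∧ (π.parts.sup : ℤ) ≤ B}
      ≤ Nat.card (Fin L → Fin (N + 1)) := by
    apply Nat.card_le_card_of_injective
      (f := fun (π : {π : N.Partition // mz ≤ rank π ∧ (π.parts.sup : ℤ) ≤ B}) =>
        fun i : Fin L => (⟨π.1.parts.count ((i : ℕ) + 1), ?_⟩ : Fin (N+1)))
    · rintro ⟨π₁, hr₁, hs₁⟩ ⟨π₂, hr₂, hs₂⟩ hf
      apply Subtype.ext
      apply Nat.Partition.ext
      ext v
      match v with
      | 0 =>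
        rw [Multiset.count_eq_zero.2 (fun hm => lt_irrefl 0 (π₁.parts_pos hm)),
          Multiset.count_eq_zero.2 (fun hm => lt_irrefl 0 (π₂.parts_pos hm))]
      | v + 1 =>
        by_cases hv : v < L
        · have := congrFun hf ⟨v, hv⟩
          simpa using this
        · rw [Multiset.count_eq_zero.2, Multiset.count_eq_zero.2]
          · intro hm
            have h1 : (v+1 : ℕ) ≤ π₂.parts.sup := le_sup hm
            have : ((v+1:ℕ) : ℤ) ≤ (L : ℤ) := le_trans (by exact_mod_cast h1) (le_trans hs₂ hB)
            omega
          · intro hm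
            have h1 : (v+1 : ℕ) ≤ π₁.parts.sup := le_sup hm
            have : ((v+1:ℕ) : ℤ) ≤ (L : ℤ) := le_trans (by exact_mod_cast h1) (le_trans hs₁ hB)
            omega
    · have h1 : π.1.parts.count ((i : ℕ)+1) ≤ π.1.parts.card :=
        Multiset.count_le_card _ _
      have h2 : π.1.parts.card ≤ π.1.parts.sum :=
        card_le_sum (fun a ha => π.1.parts_pos ha)
      rw [π.1.parts_sum] at h2
      omega
  calc Nat.card _ ≤ Nat.card (Fin L → Fin (N+1)) := key
    _ = (N + 1) ^ L := by
        rw [Nat.card_fun]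
        simp



/- ### summability -/

lemma nat_bound (n L : ℕ) : (n + 2) ^ L ≤ 3 ^ L * (n ^ L + 1) := by
  rcases Nat.eq_zero_or_pos n with rfl | hn
  · calc (0 + 2) ^ L ≤ 3 ^ L := Nat.pow_le_pow_left (by omega) L
      _ ≤ 3 ^ L * (0 ^ L + 1) := Nat.le_mul_of_pos_right _ (Nat.succ_pos _)
  · have h1 : (n + 2) ^ L ≤ (3 * n) ^ L := Nat.pow_le_pow_left (by omega) L
    rw [mul_pow] at h1
    have : 3 ^ L * n ^ L ≤ 3 ^ L * (n ^ L + 1) := by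
      apply Nat.mul_le_mul_left
      omega
    omega

lemma summable_aux (q : ℝ) (hq : |q| < 1) (L : ℕ) (c : ℕ → ℕ)
    (hc : ∀ n, c n ≤ (n + 2) ^ L) :
    Summable (fun n => (c n : ℝ) * q ^ (n + 1)) := by
  have hq' : ‖|q|‖ < 1 := by rwa [Real.norm_eq_abs, abs_abs]
  have hg : Summable (fun n : ℕ => (3 : ℝ) ^ L * ((n : ℝ) ^ L * |q| ^ n + |q| ^ n)) :=
    ((summable_pow_mul_geometric_of_norm_lt_one L hq').add
      (summable_geometric_of_lt_one (abs_nonneg q) hq)).mul_left _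
  apply Summable.of_norm_bounded hg
  intro n
  calc ‖(c n : ℝ) * q ^ (n + 1)‖ = (c n : ℝ) * |q| ^ (n + 1) := by
        rw [norm_mul, Real.norm_natCast, norm_pow, Real.norm_eq_abs]
    _ ≤ ((3 ^ L * (n ^ L + 1) : ℕ) : ℝ) * |q| ^ n := by
        apply mul_le_mul
        · exact_mod_cast le_trans (hc n) (nat_bound n L)
        · exact pow_le_pow_of_le_one (abs_nonneg q) hq.le (Nat.le_succ n)
        · positivity
        · positivity
    _ = (3 : ℝ) ^ L * ((n : ℝ) ^ L * |q| ^ n + |q| ^ n) := by push_cast; ring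

lemma card_bij' (m L j N : ℕ) (hN : N = m + j + 2) :
    Nat.card {π : N.Partition // (m : ℤ) ≤ rank π ∧ (π.parts.sup : ℤ) ≤ (L : ℤ)}
      = Nat.card {π : (j + 1).Partition //
          (-2 - (m : ℤ)) ≤ rank π ∧ (π.parts.sup : ℤ) ≤ (L : ℤ) - 1 - (m : ℤ)} := by
  subst hN; exact card_bij m L j


/-- for L > m ≥ 0,
`Q_m^L(q) = q^{m+1}(Q_{-2-m}^{L-1-m}(q) + 1)`. -/
theorem stmt8 (q : ℝ) (hq : |q| < 1) (m L : ℕ) (h : m < L) :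
    QL q m L = q ^ (m + 1) * (QL q (-2 - m) (L - 1 - m) + 1) := by
  set c : ℕ → ℕ := fun n =>
    Nat.card {π : (n + 1).Partition // (m : ℤ) ≤ rank π ∧ (π.parts.sup : ℤ) ≤ (L : ℤ)} with hc_def
  set d : ℕ → ℕ := fun n =>
    Nat.card {π : (n + 1).Partition //
      (-2 - (m : ℤ)) ≤ rank π ∧ (π.parts.sup : ℤ) ≤ (L : ℤ) - 1 - (m : ℤ)} with hd_def
  have hQL1 : QL q m L = ∑' n : ℕ, (c n : ℝ) * q ^ (n + 1) := rfl
  have hQL2 : QL q (-2 - m) (L - 1 - m) = ∑' n : ℕ, (d n : ℝ) * q ^ (n + 1) := rfl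
  have hcb : ∀ n, c n ≤ (n + 2) ^ L := fun n =>
    card_le_bound (n + 1) L m (L : ℤ) le_rfl
  have hdb : ∀ n, d n ≤ (n + 2) ^ L := fun n =>
    card_le_bound (n + 1) L (-2 - (m : ℤ)) ((L : ℤ) - 1 - m) (by omega)
  have hsc : Summable (fun n => (c n : ℝ) * q ^ (n + 1)) := summable_aux q hq L c hcb
  have hsd : Summable (fun n => (d n : ℝ) * q ^ (n + 1)) := summable_aux q hq L d hdb
  have hsplit := hsc.sum_add_tsum_nat_add (m + 1)
  have hfin : ∑ i ∈ Finset.range (m + 1), (c i : ℝ) * q ^ (i + 1) = q ^ (m + 1) := by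
    rw [Finset.sum_range_succ]
    have h0 : ∑ i ∈ Finset.range m, (c i : ℝ) * q ^ (i + 1) = 0 := by
      apply Finset.sum_eq_zero
      intro i hi
      rw [Finset.mem_range] at hi
      have : c i = 0 := card_small m L i hi
      rw [this]
      simp
    have h1 : c m = 1 := card_base m L h
    rw [h0, h1]
    simp
  have htail : ∀ n : ℕ, (c (n + (m + 1)) : ℝ) * q ^ (n + (m + 1) + 1)
      = q ^ (m + 1) * ((d n : ℝ) * q ^ (n + 1)) := by
    intro n
    have : c (n + (m + 1)) = d n := by
      rw [hc_def, hd_def]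
      exact card_bij' m L n (n + (m + 1) + 1) (by omega)
    rw [this]
    ring
  rw [hQL1, hQL2, ← hsplit, hfin]
  have : ∑' n : ℕ, (c (n + (m + 1)) : ℝ) * q ^ (n + (m + 1) + 1)
      = q ^ (m + 1) * ∑' n : ℕ, (d n : ℝ) * q ^ (n + 1) := by
    rw [← tsum_mul_left]
    exact tsum_congr htail
  rw [this]
  ring

end Dyson
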